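/- Let Q be the cyclic quiver with vertex set ℤ/n and arrows a_i : i → i+1, and Λ = KQ/(KQ)_{≥2} over a field K. A graded automorphism φ of Λ fixing all vertices e_i and mapping a_i ↦ χ(a_i)a_i for scalars χ(a_i) ∈ K* is inner if and only if the product ∏_{i∈ℤ/n} χ(a_i) equals 1. -/

import Mathlib

/-- for the truncated cyclic quiver algebra `Λ = KQ/(KQ)_{≥2}` with
vertices `e i` and arrows `a i : i → i+1`, a (graded) automorphism `φ` fixing all
vertices and mapping `a i ↦ χ i • a i` (with `χ i ∈ K*`) is inner if and only if
`∏ i, χ i = 1`. -/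
theorem stmt_16 (K : Type*) [Field K] (n : ℕ) [NeZero n] (hn : 1 ≤ n)
    (Λ : Type*) [Ring Λ] [Algebra K Λ]
    (e a : ZMod n → Λ)
    (bas : Module.Basis (ZMod n ⊕ ZMod n) K Λ)
    (hbas : ∀ i, bas (Sum.inl i) = e i ∧ bas (Sum.inr i) = a i)
    (hee : ∀ i j, e i * e j = if i = j then e i else 0)
    (hea : ∀ i j, e i * a j = if i = j then a j else 0)
    (hae : ∀ i j, a i * e j = if j = i + 1 then a i else 0)
    (haa : ∀ i j, a i * a j = 0)
    (hone : (∑ i, e i) = 1)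
    (χ : ZMod n → K) (hχ : ∀ i, χ i ≠ 0)
    (φ : Λ ≃ₐ[K] Λ)
    (hφe : ∀ i, φ (e i) = e i)
    (hφa : ∀ i, φ (a i) = χ i • a i) :
    (∃ u : Λˣ, ∀ y : Λ, φ y = (u : Λ) * y * ((u⁻¹ : Λˣ) : Λ)) ↔ ∏ i, χ i = 1 := by
  have hcancel : ∀ (i : ZMod n) (c d : K), c • a i = d • a i → c = d := by
    intro i c d h
    have h2 : (c - d) • bas (Sum.inr i) = 0 := by
      rw [(hbas i).2, sub_smul, h, sub_self]
    rcases smul_eq_zero.mp h2 with h3 | h3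
    · exact sub_eq_zero.mp h3
    · exact absurd h3 (bas.ne_zero _)
  have hmul_a : ∀ (x : Λ) (i : ZMod n), x * a i = bas.repr x (Sum.inl i) • a i := by
    intro x i
    have h : (LinearMap.mulRight K (a i)) = (bas.coord (Sum.inl i)).smulRight (a i) := by
      apply bas.ext
      rintro (j | j) <;>
        simp only [LinearMap.mulRight_apply, LinearMap.smulRight_apply, Module.Basis.coord_apply,
          Module.Basis.repr_self, Finsupp.single_apply]
      · rw [(hbas j).1, hea]
        simp only [Sum.inl.injEq]
        split_ifs <;> simp
      · rw [(hbas j).2, haa, if_neg (by simp), zero_smul]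
    have := congrArg (· x) h
    simpa using this
  have ha_mul : ∀ (x : Λ) (i : ZMod n), a i * x = bas.repr x (Sum.inl (i + 1)) • a i := by
    intro x i
    have h : (LinearMap.mulLeft K (a i)) = (bas.coord (Sum.inl (i + 1))).smulRight (a i) := by
      apply bas.ext
      rintro (j | j) <;>
        simp only [LinearMap.mulLeft_apply, LinearMap.smulRight_apply, Module.Basis.coord_apply,
          Module.Basis.repr_self, Finsupp.single_apply]
      · rw [(hbas j).1, hae]
        simp only [Sum.inl.injEq]
        split_ifs <;> simp
      · rw [(hbas j).2, haa, if_neg (by simp), zero_smul]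
    have := congrArg (· x) h
    simpa using this
  constructor
  · -- φ inner ⇒ ∏ χ = 1
    rintro ⟨u, hu⟩
    set α : ZMod n → K := fun i => bas.repr (u : Λ) (Sum.inl i) with hα_def
    set α' : ZMod n → K := fun i => bas.repr ((u⁻¹ : Λˣ) : Λ) (Sum.inl i) with hα'_def
    have hinv : ∀ j : ZMod n, α j * α' j = 1 := by
      intro j
      have h1 : a (j - 1) * ((u : Λ) * ((u⁻¹ : Λˣ) : Λ)) = a (j - 1) := by
        rw [Units.mul_inv, mul_one]
      have h2 : a (j - 1) * ((u : Λ) * ((u⁻¹ : Λˣ) : Λ)) = (α j * α' j) • a (j - 1) := by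
        rw [← mul_assoc, ha_mul (u : Λ) (j - 1), smul_mul_assoc,
          ha_mul ((u⁻¹ : Λˣ) : Λ) (j - 1), smul_smul, sub_add_cancel]
      have := h1.symm.trans h2
      have : (1 : K) • a (j - 1) = (α j * α' j) • a (j - 1) := by
        rw [one_smul]; exact this
      exact (hcancel _ _ _ this).symm
    have hαne : ∀ j, α j ≠ 0 := fun j => left_ne_zero_of_mul_eq_one (hinv j)
    have hrec : ∀ i : ZMod n, α i = χ i * α (i + 1) := by
      intro i
      have h1 : (u : Λ) * a i = α i • a i := hmul_a _ i
      have h2 : (u : Λ) * a i = (χ i * α (i + 1)) • a i := by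
        have hphi : φ (a i) * (u : Λ) = (u : Λ) * a i := by
          rw [hu (a i), mul_assoc, Units.inv_mul, mul_one]
        rw [← hphi, hφa, smul_mul_assoc, ha_mul (u : Λ) i, smul_smul]
      exact hcancel _ _ _ (h1.symm.trans h2)
    have : ∏ i, χ i = (∏ i, α i) / (∏ i : ZMod n, α (i + 1)) := by
      rw [← Finset.prod_div_distrib]
      apply Finset.prod_congr rfl
      intro i _
      rw [hrec i, mul_div_assoc, div_self (hαne _), mul_one]
    rw [this]
    have hshift : (∏ i : ZMod n, α (i + 1)) = ∏ i, α i :=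
      Fintype.prod_equiv (Equiv.addRight (1 : ZMod n)) _ _ (fun i => rfl)
    rw [hshift, div_self (Finset.prod_ne_zero_iff.mpr (fun i _ => hαne i))]
  · -- ∏ χ = 1 ⇒ φ inner
    intro hprod
    set c : ZMod n → K := fun i => ∏ k ∈ Finset.range i.val, (χ (k : ZMod n))⁻¹ with hc_def
    have hcne : ∀ i, c i ≠ 0 :=
      fun i => Finset.prod_ne_zero_iff.mpr (fun k _ => inv_ne_zero (hχ _))
    have hrange : ∀ f : ZMod n → K, ∏ k ∈ Finset.range n, f (k : ZMod n) = ∏ i, f i := by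
      intro f
      have hbij : Function.Bijective (fun k : Fin n => ((k : ℕ) : ZMod n)) := by
        rw [Fintype.bijective_iff_injective_and_card]
        refine ⟨fun k l h => ?_, by simp [ZMod.card]⟩
        have := congrArg ZMod.val h
        simpa [ZMod.val_cast_of_lt k.isLt, ZMod.val_cast_of_lt l.isLt, Fin.val_inj] using this
      rw [← Fin.prod_univ_eq_prod_range (fun k => f (k : ZMod n)) n]
      exact Fintype.prod_bijective _ hbij _ _ (fun k => rfl)
    have hc0 : c 0 = 1 := by simp [hc_def, ZMod.val_zero]
    have hrecc : ∀ j : ZMod n, c (j + 1) = c j * (χ j)⁻¹ := by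
      intro j
      by_cases h : j.val + 1 < n
      · have h1n : Fact (1 < n) := ⟨lt_of_le_of_lt (Nat.le_add_left 1 j.val) h⟩
        have hval : (j + 1).val = j.val + 1 := by
          rw [ZMod.val_add, ZMod.val_one n, Nat.mod_eq_of_lt h]
        simp only [hc_def, hval, Finset.prod_range_succ, ZMod.natCast_zmod_val]
      · have hjv : j.val + 1 = n := Nat.le_antisymm (Nat.succ_le_of_lt j.val_lt) (not_lt.mp h)
        have hj1 : j + 1 = 0 := by
          have h0 : ((j.val + 1 : ℕ) : ZMod n) = (0 : ZMod n) := by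
            rw [hjv, ZMod.natCast_self]
          rwa [Nat.cast_add, Nat.cast_one, ZMod.natCast_zmod_val] at h0
        have hstep : ∏ k ∈ Finset.range (j.val + 1), (χ ((k : ℕ) : ZMod n))⁻¹
            = c j * (χ j)⁻¹ := by
          rw [Finset.prod_range_succ]
          simp only [hc_def, ZMod.natCast_zmod_val]
        rw [hjv] at hstep
        rw [hj1, hc0, ← hstep, hrange (fun i => (χ i)⁻¹), Finset.prod_inv_distrib, hprod,
          inv_one]
    -- the candidate unit and its inverse
    set u : Λ := ∑ i, c i • e i with hu_def
    set v : Λ := ∑ i, (c i)⁻¹ • e i with hv_def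
    have hsum_e : ∀ (f : ZMod n → K) (j : ZMod n), (∑ i, f i • e i) * e j = f j • e j := by
      intro f j
      rw [Finset.sum_mul,
        Finset.sum_congr rfl (fun i _ => by rw [smul_mul_assoc, hee, smul_ite, smul_zero]),
        Finset.sum_ite_eq', if_pos (Finset.mem_univ j)]
    have he_sum : ∀ (f : ZMod n → K) (j : ZMod n), e j * (∑ i, f i • e i) = f j • e j := by
      intro f j
      rw [Finset.mul_sum,
        Finset.sum_congr rfl (fun i _ => by rw [mul_smul_comm, hee, smul_ite, smul_zero]),
        Finset.sum_ite_eq, if_pos (Finset.mem_univ j)]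
    have hsum_a : ∀ (f : ZMod n → K) (j : ZMod n), (∑ i, f i • e i) * a j = f j • a j := by
      intro f j
      rw [Finset.sum_mul,
        Finset.sum_congr rfl (fun i _ => by rw [smul_mul_assoc, hea, smul_ite, smul_zero]),
        Finset.sum_ite_eq', if_pos (Finset.mem_univ j)]
    have ha_sum : ∀ (f : ZMod n → K) (j : ZMod n),
        a j * (∑ i, f i • e i) = f (j + 1) • a j := by
      intro f j
      rw [Finset.mul_sum,
        Finset.sum_congr rfl (fun i _ => by rw [mul_smul_comm, hae, smul_ite, smul_zero]),
        Finset.sum_ite_eq', if_pos (Finset.mem_univ (j + 1))]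
    have huv : u * v = 1 := by
      rw [hu_def, Finset.sum_mul,
        Finset.sum_congr rfl (fun i _ => by
          rw [smul_mul_assoc, he_sum (fun k => (c k)⁻¹) i, smul_smul,
            mul_inv_cancel₀ (hcne i), one_smul]),
        hone]
    have hvu : v * u = 1 := by
      rw [hv_def, Finset.sum_mul,
        Finset.sum_congr rfl (fun i _ => by
          rw [smul_mul_assoc, he_sum c i, smul_smul, inv_mul_cancel₀ (hcne i), one_smul]),
        hone]
    refine ⟨⟨u, v, huv, hvu⟩, ?_⟩
    intro y
    show φ y = u * y * v
    have key : (φ.toLinearMap : Λ →ₗ[K] Λ)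
        = (LinearMap.mulRight K v).comp (LinearMap.mulLeft K u) := by
      apply bas.ext
      rintro (j | j) <;>
        simp only [LinearMap.coe_comp, Function.comp_apply, LinearMap.mulLeft_apply,
          LinearMap.mulRight_apply, AlgEquiv.toLinearMap_apply]
      · rw [(hbas j).1, hφe, hu_def, hsum_e c j, smul_mul_assoc, hv_def,
          he_sum (fun k => (c k)⁻¹) j, smul_smul, mul_inv_cancel₀ (hcne j), one_smul]
      · rw [(hbas j).2, hφa, hu_def, hsum_a c j, smul_mul_assoc, hv_def,
          ha_sum (fun k => (c k)⁻¹) j, smul_smul, hrecc j, mul_inv, inv_inv, ← mul_assoc,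
          mul_inv_cancel₀ (hcne j), one_mul]
    have := LinearMap.congr_fun key y
    simpa [mul_assoc] using this
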